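/- arXiv:1604.00371 — 3 statements merged into one kernel-verified Lean document; each statement's English description precedes it below -/
import Mathlib

section
/- Let N : ℕ → ℕ satisfy N(3) = 1 and N(n+1) = (2n - 3) * N(n) for all n ≥ 3. Then for all n ≥ 2, N(n+1) = (2n-2)! / (2^(n-1) * (n-1)!). (This counts labelled skeletons: trees with n+1 labelled leaves and all internal vertices of degree 3.) -/
theorem stmt_8 (N : ℕ → ℕ) (h3 : N 3 = 1)
    (hrec : ∀ n : ℕ, 3 ≤ n → N (n + 1) = (2 * n - 3) * N n) :
    ∀ n : ℕ, 2 ≤ n →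
      N (n + 1) = (2 * n - 2).factorial / (2 ^ (n - 1) * (n - 1).factorial) := by
  have key : ∀ n : ℕ, 2 ≤ n →
      N (n + 1) * (2 ^ (n - 1) * (n - 1).factorial) = (2 * n - 2).factorial := by
    intro n hn
    induction n, hn using Nat.le_induction with
    | base => simp [h3, Nat.factorial]
    | succ n hn ih =>
      have h1 : N (n + 1 + 1) = (2 * (n + 1) - 3) * N (n + 1) :=
        hrec (n + 1) (by omega)
      have h2 : 2 * (n + 1) - 3 = 2 * n - 1 := by omega
      have h3' : 2 * (n + 1) - 2 = 2 * n := by omega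
      have h4 : n + 1 - 1 = n := by omega
      have hfac : (n).factorial = n * (n - 1).factorial := by
        cases n with
        | zero => omega
        | succ m => simp [Nat.factorial]
      have hpow : (2:ℕ) ^ (n) = 2 * 2 ^ (n - 1) := by
        cases n with
        | zero => omega
        | succ m => simp [pow_succ]; ring
      rw [h1, h2, h3', h4, hfac, hpow]
      have h2n : 2 * n = (2 * n - 1) + 1 := by omega
      have hfac2 : (2 * n).factorial = (2 * n) * (2 * n - 1) * (2 * n - 2).factorial := by
        rw [h2n]
        have : 2 * n - 1 = (2 * n - 2) + 1 := by omega
        rw [Nat.factorial_succ, this, Nat.factorial_succ, ← this, ← h2n]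
        ring
      rw [hfac2, ← ih]
      ring
  intro n hn
  have hpos : 0 < 2 ^ (n - 1) * (n - 1).factorial :=
    Nat.mul_pos (Nat.pow_pos (by norm_num)) (Nat.factorial_pos _)
  exact (Nat.div_eq_of_eq_mul_left hpos (key n hn).symm).symm
end

section
/- Let (b_n)_{n≥2} be a sequence of nonnegative real numbers satisfying b_{m+n+3} ≤ b_m + b_n for all m, n ≥ 2. Then the limit lim_{n→∞} b_n / n exists and equals inf_{n≥2} b_n / n. -/
theorem stmt_9 (b : ℕ → ℝ) (hnn : ∀ n : ℕ, 2 ≤ n → 0 ≤ b n)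
    (hsub : ∀ m n : ℕ, 2 ≤ m → 2 ≤ n → b (m + n + 3) ≤ b m + b n) :
    Filter.Tendsto (fun n : ℕ => b n / n) Filter.atTop
      (nhds (⨅ n : {n : ℕ // 2 ≤ n}, b n / (n : ℕ))) := by
  have inst : Nonempty {n : ℕ // 2 ≤ n} := ⟨⟨2, le_refl 2⟩⟩
  set L := ⨅ n : {n : ℕ // 2 ≤ n}, b n / (n : ℕ) with hLdef
  have hbdd : BddBelow (Set.range fun i : {n : ℕ // 2 ≤ n} => b i / (i : ℕ)) := by
    refine ⟨0, ?_⟩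
    rintro x ⟨i, rfl⟩
    exact div_nonneg (hnn i i.2) (Nat.cast_nonneg _)
  have hLle : ∀ n : ℕ, 2 ≤ n → L ≤ b n / n := fun n hn => ciInf_le hbdd ⟨n, hn⟩
  rw [Metric.tendsto_atTop]
  intro ε hε
  have hL2 : L < L + ε / 2 := by linarith
  obtain ⟨⟨k, hk⟩, hkL⟩ := exists_lt_of_ciInf_lt hL2
  simp only at hkL
  -- hkL : b k / k < L + ε/2
  have hkpos : (0 : ℝ) < (k : ℝ) := by exact_mod_cast Nat.lt_of_lt_of_le Nat.zero_lt_two hk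
  have hbk : 0 ≤ b k := hnn k hk
  set M := ∑ r ∈ Finset.Icc 2 (k + 4), b r with hMdef
  have hM0 : 0 ≤ M := Finset.sum_nonneg fun r hr => hnn r (Finset.mem_Icc.mp hr).1
  have hMle : ∀ r, 2 ≤ r → r ≤ k + 4 → b r ≤ M := by
    intro r h1 h2
    exact Finset.single_le_sum (fun i hi => hnn i (Finset.mem_Icc.mp hi).1)
      (Finset.mem_Icc.mpr ⟨h1, h2⟩)
  have key : ∀ q r : ℕ, 2 ≤ r → b (r + q * (k + 3)) ≤ b r + (q : ℝ) * b k := by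
    intro q
    induction q with
    | zero => intro r _; simp
    | succ q ih =>
      intro r hr
      have h1 : r + (q + 1) * (k + 3) = (r + q * (k + 3)) + k + 3 := by ring
      rw [h1]
      have h2 := hsub (r + q * (k + 3)) k (le_trans hr (Nat.le_add_right _ _)) hk
      have h3 := ih r hr
      push_cast
      linarith
  obtain ⟨N, hN⟩ := exists_nat_gt (2 * M / ε)
  refine ⟨max (N + 2) 2, fun n hn => ?_⟩
  have hn2 : 2 ≤ n := le_trans (le_max_right _ _) hn
  have hnN : (N : ℝ) < (n : ℝ) := by
    have : N + 2 ≤ n := le_trans (le_max_left _ _) hn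
    exact_mod_cast Nat.lt_of_lt_of_le (Nat.lt_add_of_pos_right Nat.zero_lt_two) this
  have hnpos : (0 : ℝ) < (n : ℝ) := by positivity
  -- decomposition
  set q := (n - 2) / (k + 3) with hq
  set r := 2 + (n - 2) % (k + 3) with hr
  have hdecomp : n = r + q * (k + 3) := by
    rw [hr, hq, add_assoc, Nat.mod_add_div']
    omega
  have hr2 : 2 ≤ r := Nat.le_add_right 2 _
  have hrk : r ≤ k + 4 := by
    have := Nat.mod_lt (n - 2) (y := k + 3) (by omega)
    omega
  have hbn : b n ≤ M + (q : ℝ) * b k := by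
    calc b n = b (r + q * (k + 3)) := by rw [← hdecomp]
    _ ≤ b r + (q : ℝ) * b k := key q r hr2
    _ ≤ M + (q : ℝ) * b k := by linarith [hMle r hr2 hrk]
  have hqn : (q : ℝ) * ((k : ℝ) + 3) ≤ (n : ℝ) := by
    have : q * (k + 3) ≤ n := by
      rw [hq]
      exact le_trans (Nat.div_mul_le_self _ _) (Nat.sub_le _ _)
    exact_mod_cast this
  -- bound q * b k / n ≤ b k / k
  have hqbk : (q : ℝ) * b k / n ≤ b k / k := by
    rw [div_le_div_iff₀ hnpos hkpos]
    have h1 : (q : ℝ) * b k * k ≤ (q : ℝ) * b k * ((k : ℝ) + 3) := by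
      have : (0 : ℝ) ≤ (q : ℝ) * b k := mul_nonneg (Nat.cast_nonneg _) hbk
      nlinarith
    nlinarith [mul_le_mul_of_nonneg_left hqn hbk]
  have hMn : M / n < ε / 2 := by
    rw [div_lt_iff₀ hnpos]
    have : 2 * M / ε < (n : ℝ) := lt_trans hN hnN
    rw [div_lt_iff₀ hε] at this
    linarith
  have hupper : b n / n < L + ε := by
    have h1 : b n / n ≤ M / n + (q : ℝ) * b k / n := by
      rw [← add_div]
      gcongr
    linarith
  have hlower : L ≤ b n / n := hLle n hn2
  rw [Real.dist_eq, abs_of_nonneg (by linarith)]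
  linarith
end

section
/- Let G be a connected graph (possibly infinite) and let W be a nonempty finite set of vertices of G. Then there exists a vertex w ∈ W such that all vertices of W \ {w} lie in a single connected component of the graph obtained from G by deleting w and all edges incident to w. -/
open SimpleGraph

lemma aux_reach_induce {V : Type*} {G : SimpleGraph V} {u v w : V}
    (p : G.Walk u v) (hw : w ∉ p.support) (hu : u ≠ w) (hv : v ≠ w) :
    (G.induce ({w}ᶜ : Set V)).Reachable ⟨u, hu⟩ ⟨v, hv⟩ := by
  have hs : {x | x ∈ p.support} ⊆ ({w}ᶜ : Set V) := by
    intro x hx hxw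
    simp only [Set.mem_singleton_iff] at hxw
    exact hw (hxw ▸ hx)
  have hconn := p.connected_induce_support
  have hr : (G.induce {x | x ∈ p.support}).Reachable
      ⟨u, p.start_mem_support⟩ ⟨v, p.end_mem_support⟩ := hconn _ _
  exact hr.map (induceHomOfLE _ hs).toHom

lemma aux_avoid {V : Type*} {G : SimpleGraph V} (hG : G.Connected) {r u w : V}
    (hle : G.dist r u ≤ G.dist r w) (huw : u ≠ w) :
    ∃ p : G.Walk r u, w ∉ p.support := by
  classical
  obtain ⟨p, hp⟩ := hG.exists_walk_length_eq_dist r u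
  refine ⟨p, fun hw => ?_⟩
  have h1 : G.dist r w ≤ (p.takeUntil w hw).length := SimpleGraph.dist_le _
  have h2 : G.dist w u ≤ (p.dropUntil w hw).length := SimpleGraph.dist_le _
  have h3 : 0 < G.dist w u := hG.pos_dist_of_ne (Ne.symm huw)
  have h4 : (p.takeUntil w hw).length + (p.dropUntil w hw).length = p.length := by
    rw [← SimpleGraph.Walk.length_append, p.take_spec hw]
  omega

theorem stmt_10 {V : Type*} (G : SimpleGraph V) (hG : G.Connected)
    (W : Finset V) (hW : W.Nonempty) :
    ∃ w ∈ W, ∀ u ∈ W, ∀ v ∈ W, (hu : u ≠ w) → (hv : v ≠ w) →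
      (G.induce ({w}ᶜ : Set V)).Reachable ⟨u, hu⟩ ⟨v, hv⟩ := by
  obtain ⟨r, hr⟩ := hW
  obtain ⟨w, hwW, hwmax⟩ := W.exists_max_image (fun x => G.dist r x) ⟨r, hr⟩
  refine ⟨w, hwW, ?_⟩
  intro u hu v hv hu' hv'
  obtain ⟨p, hp⟩ := aux_avoid hG (hwmax u hu) hu'
  obtain ⟨q, hq⟩ := aux_avoid hG (hwmax v hv) hv'
  have hrw : r ≠ w := fun h => hp (h ▸ p.start_mem_support)
  exact (aux_reach_induce p hp hrw hu').symm.trans (aux_reach_induce q hq hrw hv')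
end
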